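/- For every integer d ≥ 2, the Gamma function satisfies Γ((d−1)/2) / Γ(d/2) ≤ √(2π/d). -/

import Mathlib

open Real

lemma gamma_ratio_step (x : ℝ) (hx : 2 ≤ x)
    (h : Real.Gamma ((x - 1) / 2) / Real.Gamma (x / 2) ≤ Real.sqrt (2 * Real.pi / x)) :
    Real.Gamma ((x + 2 - 1) / 2) / Real.Gamma ((x + 2) / 2) ≤
      Real.sqrt (2 * Real.pi / (x + 2)) := by
  have hx0 : 0 < x := by linarith
  have h1 : (x + 2 - 1) / 2 = (x - 1) / 2 + 1 := by ring
  have h2 : (x + 2) / 2 = x / 2 + 1 := by ring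
  have hp1 : 0 < (x - 1) / 2 := by linarith
  have hp2 : 0 < x / 2 := by linarith
  have hG1 := Real.Gamma_pos_of_pos hp1
  have hG2 := Real.Gamma_pos_of_pos hp2
  rw [h1, h2, Real.Gamma_add_one (ne_of_gt hp1), Real.Gamma_add_one (ne_of_gt hp2)]
  have heq : (x - 1) / 2 * Real.Gamma ((x - 1) / 2) / (x / 2 * Real.Gamma (x / 2)) =
      ((x - 1) / x) * (Real.Gamma ((x - 1) / 2) / Real.Gamma (x / 2)) := by
    field_simp
  rw [heq]
  have hcoef : 0 ≤ (x - 1) / x := div_nonneg (by linarith) hx0.le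
  calc ((x - 1) / x) * (Real.Gamma ((x - 1) / 2) / Real.Gamma (x / 2))
      ≤ ((x - 1) / x) * Real.sqrt (2 * Real.pi / x) :=
        mul_le_mul_of_nonneg_left h hcoef
    _ = Real.sqrt (((x - 1) / x) ^ 2 * (2 * Real.pi / x)) := by
        rw [Real.sqrt_mul (sq_nonneg _), Real.sqrt_sq hcoef]
    _ ≤ Real.sqrt (2 * Real.pi / (x + 2)) := by
        apply Real.sqrt_le_sqrt
        have hpi := Real.pi_pos
        rw [show ((x - 1) / x) ^ 2 * (2 * Real.pi / x) =
            2 * Real.pi * (x - 1) ^ 2 / x ^ 3 by field_simp]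
        rw [div_le_div_iff₀ (by positivity) (by positivity)]
        nlinarith [Real.pi_pos, sq_nonneg (x - 1), hx0]

theorem gamma_ratio_le (d : ℕ) (hd : 2 ≤ d) :
    Real.Gamma ((d - 1) / 2) / Real.Gamma (d / 2) ≤ Real.sqrt (2 * Real.pi / d) := by
  induction d using Nat.strong_induction_on with
  | _ d ih =>
    match d, hd with
    | 2, _ =>
      norm_num [Real.Gamma_one_half_eq]
    | 3, _ =>
      push_cast
      rw [show ((3:ℝ) - 1) / 2 = 1 by norm_num,
        show (3:ℝ) / 2 = 1 / 2 + 1 by norm_num,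
        Real.Gamma_add_one (by norm_num), Real.Gamma_one_half_eq, Real.Gamma_one]
      have hpi := Real.pi_gt_three
      have hs : (0:ℝ) < Real.sqrt Real.pi := Real.sqrt_pos.mpr (by linarith)
      rw [show (1:ℝ) / (1 / 2 * Real.sqrt Real.pi) = 2 / Real.sqrt Real.pi by
        field_simp, div_le_iff₀ hs, ← Real.sqrt_mul (by positivity)]
      rw [Real.le_sqrt (by norm_num)]
      · nlinarith
      · positivity
    | (m + 4), _ =>
      have hih := ih (m + 2) (by omega) (by omega)
      have h := gamma_ratio_step ((m : ℝ) + 2)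
        (by have := Nat.cast_nonneg (α := ℝ) m; linarith)
        (by push_cast at hih ⊢; convert hih using 3 <;> ring)
      push_cast
      convert h using 3 <;> ring
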